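/- For saturated first-order Kripke models, bisimilarity coincides with logical equivalence: if M and N are saturated first-order Kripke models, w a world of M and v a world of N, then M,w and N,v are bisimilar if and only if they satisfy exactly the same sentences of L. -/

import Mathlib

namespace SimplicialEpistemic

/-! ## Syntax -/

inductive Formula (Ag Xv Pr : Type) : Type
  | atom : Pr → Xv → Formula Ag Xv Pr
  | top : Formula Ag Xv Pr
  | neg : Formula Ag Xv Pr → Formula Ag Xv Pr
  | and : Formula Ag Xv Pr → Formula Ag Xv Pr → Formula Ag Xv Pr
  | assign : Xv → Ag → Formula Ag Xv Pr → Formula Ag Xv Pr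
  | know : Finset Xv → Formula Ag Xv Pr → Formula Ag Xv Pr

namespace Formula

variable {Ag Xv Pr : Type} [DecidableEq Xv]

/-- Free variables of a formula. -/
def FV : Formula Ag Xv Pr → Finset Xv
  | .atom _ x => {x}
  | .top => ∅
  | .neg φ => FV φ
  | .and φ ψ => FV φ ∪ FV ψ
  | .assign x _ φ => FV φ \ {x}
  | .know Xs _ => Xs

/-- Well-formedness: in `K_X α`, the formula `α` must have no free variables.
The language `L` consists of the well-formed formulas. -/
def Wf : Formula Ag Xv Pr → Prop
  | .atom _ _ => True
  | .top => True
  | .neg φ => Wf φ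
  | .and φ ψ => Wf φ ∧ Wf ψ
  | .assign _ _ φ => Wf φ
  | .know _ α => Wf α ∧ FV α = ∅

/-- A sentence is a well-formed formula with no free variables. -/
def Sent (φ : Formula Ag Xv Pr) : Prop := Wf φ ∧ FV φ = ∅

/-- Implication `φ → ψ`, defined as `¬(φ ∧ ¬ψ)`. -/
def impl (φ ψ : Formula Ag Xv Pr) : Formula Ag Xv Pr := .neg (.and φ (.neg ψ))

/-- Biconditional `φ ↔ ψ`. -/
def fiff (φ ψ : Formula Ag Xv Pr) : Formula Ag Xv Pr := .and (impl φ ψ) (impl ψ φ)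

/-- Disjunction `φ ∨ ψ`, defined as `¬(¬φ ∧ ¬ψ)`. -/
def fdisj (φ ψ : Formula Ag Xv Pr) : Formula Ag Xv Pr := .neg (.and (.neg φ) (.neg ψ))

/-- Falsum `⊥ := ¬⊤`. -/
def fbot : Formula Ag Xv Pr := .neg .top

/-- The dual assignment operator `⟨x:=a⟩φ := ¬[x:=a]¬φ`. -/
def dia (x : Xv) (a : Ag) (φ : Formula Ag Xv Pr) : Formula Ag Xv Pr :=
  .neg (.assign x a (.neg φ))

/-- Finite conjunction of a list of formulas. -/
def bigAnd : List (Formula Ag Xv Pr) → Formula Ag Xv Pr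
  | [] => .top
  | φ :: l => .and φ (bigAnd l)

/-- Iterated assignment `[x⃗:=a⃗]φ`. -/
def assigns : List Xv → List Ag → Formula Ag Xv Pr → Formula Ag Xv Pr
  | x :: xs, a :: as, φ => .assign x a (assigns xs as φ)
  | _, _, φ => φ

/-- Substitution `φ[y/x]` of `y` for all free occurrences of `x` in `φ`. -/
def subst (x y : Xv) : Formula Ag Xv Pr → Formula Ag Xv Pr
  | .atom p z => .atom p (if z = x then y else z)
  | .top => .top
  | .neg φ => .neg (subst x y φ)
  | .and φ ψ => .and (subst x y φ) (subst x y ψ)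
  | .assign z a φ => if z = x then .assign z a φ else .assign z a (subst x y φ)
  | .know Xs α => .know (Xs.image fun z => if z = x then y else z) α

/-- Admissibility of `φ[y/x]`: `x` has no free occurrence in `φ` within the scope
of `[y:=b]` for any `b`. -/
def Adm (x y : Xv) : Formula Ag Xv Pr → Prop
  | .atom _ _ => True
  | .top => True
  | .neg φ => Adm x y φ
  | .and φ ψ => Adm x y φ ∧ Adm x y ψ
  | .assign z _ φ => z = x ∨ x ∉ FV φ ∨ (z ≠ y ∧ Adm x y φ)
  | .know _ _ => True

/-- `occurs y φ`: the variable `y` occurs (free or bound) in `φ`. -/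
def occurs (y : Xv) : Formula Ag Xv Pr → Prop
  | .atom _ z => z = y
  | .top => False
  | .neg φ => occurs y φ
  | .and φ ψ => occurs y φ ∨ occurs y ψ
  | .assign z _ φ => z = y ∨ occurs y φ
  | .know Xs α => y ∈ Xs ∨ occurs y α

/-- Propositional evaluation, treating atoms, assignment formulas and knowledge
formulas as propositional atoms. -/
def propEval (v : Formula Ag Xv Pr → Bool) : Formula Ag Xv Pr → Bool
  | .atom p x => v (.atom p x)
  | .top => true
  | .neg φ => !(propEval v φ)
  | .and φ ψ => propEval v φ && propEval v ψ
  | .assign x a φ => v (.assign x a φ)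
  | .know Xs α => v (.know Xs α)

/-- `φ` is a propositional tautology. -/
def Tautology (φ : Formula Ag Xv Pr) : Prop := ∀ v, propEval v φ = true

end Formula

/-! ## Simplicial models and their semantics -/

structure SimpModel (Ag Pr : Type) : Type 1 where
  V : Type
  faces : Set (Set V)
  χ : V → Ag
  ℓ : Pr → Set V

namespace SimpModel

variable {Ag Pr : Type}

/-- The facets: faces contained in no other face. -/
def facets (C : SimpModel Ag Pr) : Set (Set C.V) :=
  {F | F ∈ C.faces ∧ ∀ G ∈ C.faces, F ⊆ G → F = G}

/-- The conditions for being a genuine simplicial model. -/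
def IsModel (C : SimpModel Ag Pr) : Prop :=
  Nonempty C.V ∧ (∅ : Set C.V) ∉ C.faces ∧
    (∀ Y F : Set C.V, Y.Nonempty → Y ⊆ F → F ∈ C.faces → Y ∈ C.faces) ∧
    (∀ v : C.V, {v} ∈ C.faces) ∧
    (∀ F ∈ C.faces, Set.InjOn C.χ F)

end SimpModel

/-! ## First-order Kripke models and their semantics -/

structure KModel (Ag Pr : Type) : Type 1 where
  W : Type
  δ : W → Set Ag
  R : Ag → W → W → Prop
  ρ : Pr → W → Set Ag

namespace KModel

variable {Ag Pr : Type}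

/-- The conditions for being a genuine first-order Kripke model. -/
def IsModel (M : KModel Ag Pr) : Prop :=
  Nonempty M.W ∧ (∀ w : M.W, (M.δ w).Nonempty) ∧
    (∀ (a : Ag) (w v : M.W), M.R a w v → a ∈ M.δ w) ∧
    (∀ (p : Pr) (w : M.W), M.ρ p w ⊆ M.δ w)

end KModel

variable {Ag Xv Pr : Type}

/-- Simplicial satisfaction `C, F, σ ⊩ φ`. -/
def SSat [DecidableEq Xv] (C : SimpModel Ag Pr) :
    Formula Ag Xv Pr → Set C.V → (Xv → Ag) → Prop
  | .atom p x, F, σ => σ x ∈ C.χ '' (F ∩ C.ℓ p)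
  | .top, _, _ => True
  | .neg φ, F, σ => ¬ SSat C φ F σ
  | .and φ ψ, F, σ => SSat C φ F σ ∧ SSat C ψ F σ
  | .assign x a φ, F, σ => a ∈ C.χ '' F → SSat C φ F (Function.update σ x a)
  | .know Xs α, F, σ =>
      ∀ G ∈ C.facets, (∀ x ∈ Xs, σ x ∈ C.χ '' (F ∩ G)) → SSat C α G σ

/-- Kripke satisfaction `M, w, σ ⊨ φ`. -/
def KSat [DecidableEq Xv] (M : KModel Ag Pr) :
    Formula Ag Xv Pr → M.W → (Xv → Ag) → Prop
  | .atom p x, w, σ => σ x ∈ M.ρ p w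
  | .top, _, _ => True
  | .neg φ, w, σ => ¬ KSat M φ w σ
  | .and φ ψ, w, σ => KSat M φ w σ ∧ KSat M ψ w σ
  | .assign x a φ, w, σ => a ∈ M.δ w → KSat M φ w (Function.update σ x a)
  | .know Xs α, w, σ => ∀ v : M.W, (∀ x ∈ Xs, M.R (σ x) w v) → KSat M α v σ

/-! ## Bisimulations -/

/-- Bisimulation between simplicial models. -/
def IsSBisim (C D : SimpModel Ag Pr) (Z : Set (Set C.V × Set D.V)) : Prop :=
  (∀ q ∈ Z, q.1 ∈ C.facets ∧ q.2 ∈ D.facets) ∧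
    ∀ F G, (F, G) ∈ Z →
      (C.χ '' F = D.χ '' G ∧ ∀ p : Pr, C.χ '' (F ∩ C.ℓ p) = D.χ '' (G ∩ D.ℓ p)) ∧
      (∀ (As : Set Ag) (F' : Set C.V), F' ∈ C.facets → As ⊆ C.χ '' (F ∩ F') →
        ∃ G' ∈ D.facets, As ⊆ D.χ '' (G ∩ G') ∧ (F', G') ∈ Z) ∧
      (∀ (As : Set Ag) (G' : Set D.V), G' ∈ D.facets → As ⊆ D.χ '' (G ∩ G') →
        ∃ F' ∈ C.facets, As ⊆ C.χ '' (F ∩ F') ∧ (F', G') ∈ Z)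

/-- Bisimulation between first-order Kripke models. -/
def IsKBisim (M N : KModel Ag Pr) (Z : Set (M.W × N.W)) : Prop :=
  ∀ w v, (w, v) ∈ Z →
    (M.δ w = N.δ v ∧ ∀ p : Pr, M.ρ p w = N.ρ p v) ∧
    (∀ (As : Set Ag) (w' : M.W), (∀ a ∈ As, M.R a w w') →
      ∃ v' : N.W, (∀ a ∈ As, N.R a v v') ∧ (w', v') ∈ Z) ∧
    (∀ (As : Set Ag) (v' : N.W), (∀ a ∈ As, N.R a v v') →
      ∃ w' : M.W, (∀ a ∈ As, M.R a w w') ∧ (w', v') ∈ Z)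

/-! ## Local epistemic models -/

/-- (Local S5): the restriction of `R_a` to `{w | a ∈ δ(w)}` is an equivalence relation. -/
def LocalS5 (M : KModel Ag Pr) : Prop :=
  ∀ a : Ag, Equivalence (fun w v : {w : M.W // a ∈ M.δ w} => M.R a w.1 v.1)

/-- (Individually Increasing Domain). -/
def IndInc (M : KModel Ag Pr) : Prop :=
  ∀ (a : Ag) (w v : M.W), a ∈ M.δ w → M.R a w v → a ∈ M.δ v

/-- (Local Predicates). -/
def LocalPred (M : KModel Ag Pr) : Prop :=
  ∀ (p : Pr) (a : Ag) (w v : M.W), a ∈ M.ρ p w → M.R a w v → a ∈ M.ρ p v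

/-- (Collectively Decreasing Domain). -/
def CollDec (M : KModel Ag Pr) : Prop :=
  ∀ w v : M.W, (∀ a ∈ M.δ w, M.R a w v) → M.δ v ⊆ M.δ w

/-- A local epistemic model. -/
def IsLEM (M : KModel Ag Pr) : Prop :=
  LocalS5 M ∧ IndInc M ∧ LocalPred M ∧ CollDec M

/-- (Properness): `⋂_{a ∈ δ(w)} R_a(w) = {w}` for every `w`. -/
def Proper (M : KModel Ag Pr) : Prop :=
  ∀ w : M.W, {v : M.W | ∀ a ∈ M.δ w, M.R a w v} = {w}

/-! ## Properization -/

/-- `[w]_δ = ⋂_{a ∈ δ(w)} R_a(w)`. -/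
def cell (M : KModel Ag Pr) (w : M.W) : Set M.W := {v | ∀ a ∈ M.δ w, M.R a w v}

/-- The properization `M^pr` of a Kripke model. -/
noncomputable def properize (M : KModel Ag Pr) : KModel Ag Pr where
  W := {S : Set M.W // ∃ w : M.W, S = cell M w}
  δ := fun S => M.δ S.2.choose
  R := fun a S T => ∃ w v : M.W, S.1 = cell M w ∧ T.1 = cell M v ∧ M.R a w v
  ρ := fun p S => M.ρ p S.2.choose

/-! ## The maps LEM and SC -/

/-- `LEM(C)`: the first-order Kripke model associated to a simplicial model. -/
def LEMof (C : SimpModel Ag Pr) : KModel Ag Pr where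
  W := {F : Set C.V // F ∈ C.facets}
  δ := fun F => C.χ '' F.1
  R := fun a F G => a ∈ C.χ '' (F.1 ∩ G.1)
  ρ := fun p F => C.χ '' (F.1 ∩ C.ℓ p)

/-- Vertices of `SC(M)`: pairs `(a, [w]_a)` with `a ∈ δ(w)`, `[w]_a = R_a(w)`. -/
abbrev SCVert (M : KModel Ag Pr) : Type :=
  {u : Ag × Set M.W // ∃ w : M.W, u.1 ∈ M.δ w ∧ u.2 = {v : M.W | M.R u.1 w v}}

/-- `F^M_w = {(a, [w]_a) | a ∈ δ(w)}`. -/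
def SCface (M : KModel Ag Pr) (w : M.W) : Set (SCVert M) :=
  {u | u.1.1 ∈ M.δ w ∧ u.1.2 = {v : M.W | M.R u.1.1 w v}}

/-- `SC(M)`: the simplicial model associated to a Kripke model. -/
def SCof (M : KModel Ag Pr) : SimpModel Ag Pr where
  V := SCVert M
  faces := {F : Set (SCVert M) | F.Nonempty ∧ ∃ w : M.W, F ⊆ SCface M w}
  χ := fun u => u.1.1
  ℓ := fun p => {u | ∃ w : M.W, u.1.1 ∈ M.ρ p w ∧ u.1.2 = {v : M.W | M.R u.1.1 w v}}

/-! ## Isomorphisms -/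

/-- Isomorphism of first-order Kripke models. -/
structure KIso (M N : KModel Ag Pr) where
  toEquiv : M.W ≃ N.W
  δ_eq : ∀ w : M.W, N.δ (toEquiv w) = M.δ w
  R_iff : ∀ (a : Ag) (w v : M.W), N.R a (toEquiv w) (toEquiv v) ↔ M.R a w v
  ρ_eq : ∀ (p : Pr) (w : M.W), N.ρ p (toEquiv w) = M.ρ p w

/-- Isomorphism of simplicial models. -/
structure SIso (C D : SimpModel Ag Pr) where
  toEquiv : C.V ≃ D.V
  face_iff : ∀ F : Set C.V, F ∈ C.faces ↔ (toEquiv '' F) ∈ D.faces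
  χ_eq : ∀ v : C.V, D.χ (toEquiv v) = C.χ v
  ℓ_iff : ∀ (p : Pr) (v : C.V), toEquiv v ∈ D.ℓ p ↔ v ∈ C.ℓ p

/-! ## The proof system LEL -/

/-- The axiom system `LEL` (over the well-formed fragment of the language). -/
inductive LEL [DecidableEq Xv] : Formula Ag Xv Pr → Prop
  | taut {φ} : Formula.Wf φ → Formula.Tautology φ → LEL φ
  | kk {Xs : Finset Xv} {α β} : Formula.Sent α → Formula.Sent β →
      LEL (Formula.impl (.know Xs (Formula.impl α β))
        (Formula.impl (.know Xs α) (.know Xs β)))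
  | mono {Xs Ys : Finset Xv} {α} : Xs ⊆ Ys → Formula.Sent α →
      LEL (Formula.impl (.know Xs α) (.know Ys α))
  | kasgn {x : Xv} {a : Ag} {φ ψ} : Formula.Wf φ → Formula.Wf ψ →
      LEL (Formula.impl (.assign x a (Formula.impl φ ψ))
        (Formula.impl (.assign x a φ) (.assign x a ψ)))
  | det {x : Xv} {a : Ag} {φ} : Formula.Wf φ →
      LEL (Formula.impl (Formula.dia x a φ) (.assign x a φ))
  | tr {x : Xv} {a : Ag} {φ} : Formula.Wf φ → x ∉ Formula.FV φ →
      LEL (Formula.impl φ (.assign x a φ))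
  | sub {x y : Xv} {a : Ag} {φ} : Formula.Wf φ → Formula.Adm x y φ →
      LEL (.assign y a (Formula.impl (.assign x a φ) (Formula.subst x y φ)))
  | com {x y : Xv} {a b : Ag} {φ} : Formula.Wf φ → x ≠ y →
      LEL (Formula.impl (.assign x a (.assign y b φ)) (.assign y b (.assign x a φ)))
  | ui {x : Xv} {φ} (l : List Ag) : Formula.Wf φ → l.Nodup → (∀ a : Ag, a ∈ l) →
      LEL (Formula.impl (Formula.bigAnd (l.map fun a => .assign x a φ)) φ)
  | tK {Xs : Finset Xv} {α} : Formula.Sent α → LEL (Formula.impl (.know Xs α) α)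
  | kni {xs : List Xv} {as : List Ag} {α} :
      Formula.Sent α → xs.Nodup → xs.length = as.length →
      LEL (Formula.assigns xs as (Formula.impl (.neg (.know xs.toFinset α))
        (.know xs.toFinset (Formula.assigns xs as (.neg (.know xs.toFinset α))))))
  | epi {x : Xv} {a : Ag} : LEL (.assign x a (.know {x} (Formula.dia x a .top)))
  | api {x : Xv} {a : Ag} {p : Pr} :
      LEL (.assign x a (Formula.impl (.atom p x) (.know {x} (.assign x a (.atom p x)))))
  | eni {xs : List Xv} {as : List Ag} {z : Xv} (l : List Ag) :
      xs.Nodup → xs.length = as.length → l.Nodup → (∀ b : Ag, b ∈ l ↔ b ∉ as) →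
      LEL (Formula.assigns xs as
        (Formula.impl (Formula.bigAnd (l.map fun b => .assign z b Formula.fbot))
          (.know xs.toFinset (Formula.bigAnd (l.map fun b => .assign z b Formula.fbot)))))
  | mp {φ ψ} : LEL (Formula.impl φ ψ) → LEL φ → LEL ψ
  | necK {α} : Formula.Sent α → LEL α → LEL (.know ∅ α)
  | necA {x : Xv} {a : Ag} {φ} : LEL φ → LEL (.assign x a φ)

/-- `Γ` is consistent in `LEL`: no finite subset has a provably false conjunction. -/
def Consistent [DecidableEq Xv] (Γ : Set (Formula Ag Xv Pr)) : Prop :=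
  ¬ ∃ l : List (Formula Ag Xv Pr), (∀ φ ∈ l, φ ∈ Γ) ∧ LEL (.neg (Formula.bigAnd l))

end SimplicialEpistemic

namespace SimplicialEpistemic

/-- A saturated first-order Kripke model. -/
def KSaturated (Xv : Type) [DecidableEq Xv] {Ag Pr : Type} (M : KModel Ag Pr) : Prop :=
  ∀ (As : Set Ag) (w : M.W),
    ∀ Δ : Set (Formula Ag Xv Pr), (∀ α ∈ Δ, Formula.Sent α) →
      (∀ Δ₀ ⊆ Δ, Δ₀.Finite →
          ∃ v : M.W, (∀ a ∈ As, M.R a w v) ∧ ∀ α ∈ Δ₀, ∀ σ : Xv → Ag, KSat M α v σ) →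
      ∃ v : M.W, (∀ a ∈ As, M.R a w v) ∧ ∀ α ∈ Δ, ∀ σ : Xv → Ag, KSat M α v σ


section HMAux

open Formula

variable {Ag Xv Pr : Type} [DecidableEq Xv]

theorem ksat_congr (M : KModel Ag Pr) {φ : Formula Ag Xv Pr} (hφ : Formula.Wf φ) :
    ∀ {w : M.W} {σ τ : Xv → Ag},
      (∀ x ∈ Formula.FV φ, σ x = τ x) → (KSat M φ w σ ↔ KSat M φ w τ) := by
  induction φ with
  | atom p x =>
      intro w σ τ h
      simp only [KSat]
      rw [h x (by simp [FV])]
  | top => intro w σ τ h; simp [KSat]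
  | neg φ ih =>
      intro w σ τ h
      simp only [KSat]
      exact not_congr (ih hφ h)
  | and φ ψ ih1 ih2 =>
      intro w σ τ h
      simp only [KSat]
      exact and_congr (ih1 hφ.1 fun x hx => h x (by simp [FV, hx]))
        (ih2 hφ.2 fun x hx => h x (by simp [FV, hx]))
  | assign x a φ ih =>
      intro w σ τ h
      simp only [KSat]
      refine imp_congr Iff.rfl (ih hφ fun y hy => ?_)
      by_cases hxy : y = x
      · subst hxy; simp
      · rw [Function.update_of_ne hxy, Function.update_of_ne hxy]
        exact h y (by simp [FV, hy, hxy])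
  | know Xs α ih =>
      intro w σ τ h
      have hα : ∀ (u : M.W) (σ' τ' : Xv → Ag), KSat M α u σ' ↔ KSat M α u τ' := by
        intro u σ' τ'
        exact ih hφ.1 (by rw [hφ.2]; simp)
      have hrel : ∀ x ∈ Xs, σ x = τ x := fun x hx => h x (by simpa [FV] using hx)
      simp only [KSat]
      constructor
      · intro H v' hv'
        exact (hα v' σ τ).mp (H v' fun x hx => by rw [hrel x hx]; exact hv' x hx)
      · intro H v' hv'
        exact (hα v' σ τ).mpr (H v' fun x hx => by rw [← hrel x hx]; exact hv' x hx)

theorem ksat_forall_iff (M : KModel Ag Pr) {α : Formula Ag Xv Pr} (hα : Formula.Sent α)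
    (w : M.W) (σ₀ : Xv → Ag) : (∀ σ, KSat M α w σ) ↔ KSat M α w σ₀ :=
  ⟨fun h => h σ₀, fun h σ => (ksat_congr M hα.1 (by rw [hα.2]; simp)).mpr h⟩

theorem ksat_bisim {M N : KModel Ag Pr} {Z : Set (M.W × N.W)} (hZ : IsKBisim M N Z) :
    ∀ (φ : Formula Ag Xv Pr) {w : M.W} {v : N.W}, (w, v) ∈ Z →
      ∀ σ, (KSat M φ w σ ↔ KSat N φ v σ) := by
  intro φ
  induction φ with
  | atom p x =>
      intro w v hwv σ
      simp only [KSat]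
      rw [(hZ w v hwv).1.2 p]
  | top => intros; simp [KSat]
  | neg φ ih =>
      intro w v hwv σ
      simp only [KSat]
      exact not_congr (ih hwv σ)
  | and φ ψ ih1 ih2 =>
      intro w v hwv σ
      simp only [KSat]
      exact and_congr (ih1 hwv σ) (ih2 hwv σ)
  | assign x a φ ih =>
      intro w v hwv σ
      simp only [KSat]
      exact imp_congr (by rw [(hZ w v hwv).1.1]) (ih hwv _)
  | know Xs α ih =>
      intro w v hwv σ
      simp only [KSat]
      constructor
      · intro H v'' hv''
        obtain ⟨w'', hw'', hZ''⟩ := (hZ w v hwv).2.2 (σ '' (Xs : Set Xv)) v''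
          (by rintro a ⟨x, hx, rfl⟩; exact hv'' x (by simpa using hx))
        exact (ih hZ'' σ).mp (H w'' fun x hx => hw'' (σ x) ⟨x, by simpa using hx, rfl⟩)
      · intro H w'' hw''
        obtain ⟨v'', hv'', hZ''⟩ := (hZ w v hwv).2.1 (σ '' (Xs : Set Xv)) w''
          (by rintro a ⟨x, hx, rfl⟩; exact hw'' x (by simpa using hx))
        exact (ih hZ'' σ).mpr (H v'' fun x hx => hv'' (σ x) ⟨x, by simpa using hx, rfl⟩)

theorem ksat_bigAnd (M : KModel Ag Pr) :
    ∀ (l : List (Formula Ag Xv Pr)) (w : M.W) (σ : Xv → Ag),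
      KSat M (Formula.bigAnd l) w σ ↔ ∀ φ ∈ l, KSat M φ w σ := by
  intro l
  induction l with
  | nil => intro w σ; simp [Formula.bigAnd, KSat]
  | cons φ l ih => intro w σ; simp [Formula.bigAnd, KSat, ih]

theorem sent_bigAnd : ∀ {l : List (Formula Ag Xv Pr)}, (∀ φ ∈ l, Formula.Sent φ) →
    Formula.Sent (Formula.bigAnd l) := by
  intro l
  induction l with
  | nil => intro _; exact ⟨trivial, rfl⟩
  | cons φ l ih =>
      intro h
      have h1 := h φ (by simp)
      have h2 := ih fun ψ hψ => h ψ (by simp [hψ])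
      exact ⟨⟨h1.1, h2.1⟩, by simp [Formula.bigAnd, FV, h1.2, h2.2]⟩

/-- Iterated update of an assignment. -/
def updList : (Xv → Ag) → List Xv → List Ag → Xv → Ag
  | σ, x :: xs, a :: as => updList (Function.update σ x a) xs as
  | σ, _, _ => σ

theorem updList_not_mem : ∀ {xs : List Xv} (as : List Ag) (σ : Xv → Ag) {x : Xv},
    x ∉ xs → updList σ xs as x = σ x := by
  intro xs
  induction xs with
  | nil => intro as σ x _; cases as <;> rfl
  | cons y xs ih =>
      intro as σ x hx
      cases as with
      | nil => rfl
      | cons a as =>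
          have hxy : x ≠ y := fun h => hx (by simp [h])
          have hxs : x ∉ xs := fun h => hx (by simp [h])
          rw [show updList σ (y :: xs) (a :: as) = updList (Function.update σ y a) xs as from rfl,
            ih as _ hxs, Function.update_of_ne hxy]

theorem updList_mem : ∀ {xs : List Xv} {as : List Ag} (σ : Xv → Ag),
    xs.Nodup → xs.length = as.length → ∀ {x : Xv}, x ∈ xs → updList σ xs as x ∈ as := by
  intro xs
  induction xs with
  | nil => intro as σ _ _ x hx; exact absurd hx List.not_mem_nil
  | cons y xs ih =>
      intro as σ hnd hlen x hx
      cases as with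
      | nil => simp at hlen
      | cons a as =>
          rw [show updList σ (y :: xs) (a :: as) = updList (Function.update σ y a) xs as from rfl]
          rcases List.mem_cons.mp hx with h | h
          · subst h
            rw [updList_not_mem as _ (List.nodup_cons.mp hnd).1, Function.update_self]
            exact List.mem_cons_self
          · exact List.mem_cons_of_mem a
              (ih _ (List.nodup_cons.mp hnd).2 (by simpa using hlen) h)

theorem updList_surj : ∀ {xs : List Xv} {as : List Ag} (σ : Xv → Ag),
    xs.Nodup → xs.length = as.length → ∀ {a : Ag}, a ∈ as →
      ∃ x ∈ xs, updList σ xs as x = a := by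
  intro xs
  induction xs with
  | nil =>
      intro as σ _ hlen a ha
      cases as with
      | nil => exact absurd ha List.not_mem_nil
      | cons b as => simp at hlen
  | cons y xs ih =>
      intro as σ hnd hlen a ha
      cases as with
      | nil => exact absurd ha List.not_mem_nil
      | cons b as =>
          rw [show updList σ (y :: xs) (b :: as) = updList (Function.update σ y b) xs as from rfl]
          rcases List.mem_cons.mp ha with h | h
          · subst h
            exact ⟨y, List.mem_cons_self, by
              rw [updList_not_mem as _ (List.nodup_cons.mp hnd).1, Function.update_self]⟩
          · obtain ⟨x, hx, hxa⟩ := ih (Function.update σ y b)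
              (List.nodup_cons.mp hnd).2 (by simpa using hlen) h
            exact ⟨x, List.mem_cons_of_mem y hx, hxa⟩

theorem ksat_assigns (M : KModel Ag Pr) (φ : Formula Ag Xv Pr) :
    ∀ {xs : List Xv} {as : List Ag}, xs.length = as.length → ∀ (w : M.W) (σ : Xv → Ag),
      KSat M (Formula.assigns xs as φ) w σ ↔
        ((∀ a ∈ as, a ∈ M.δ w) → KSat M φ w (updList σ xs as)) := by
  intro xs
  induction xs with
  | nil =>
      intro as hlen w σ
      cases as with
      | nil => simp [Formula.assigns, updList]
      | cons a as => simp at hlen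
  | cons x xs ih =>
      intro as hlen w σ
      cases as with
      | nil => simp at hlen
      | cons a as =>
          rw [show Formula.assigns (x :: xs) (a :: as) φ
              = Formula.assign x a (Formula.assigns xs as φ) from rfl,
            show updList σ (x :: xs) (a :: as) = updList (Function.update σ x a) xs as from rfl]
          simp only [KSat]
          rw [ih (by simpa using hlen) w (Function.update σ x a)]
          constructor
          · intro H hall
            exact H (hall a (by simp)) fun a' ha' => hall a' (by simp [ha'])
          · intro H ha hrest
            refine H fun a' ha' => ?_
            rcases List.mem_cons.mp ha' with h | h
            · subst h; exact ha
            · exact hrest a' h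

theorem fv_assigns : ∀ {xs : List Xv} {as : List Ag} (φ : Formula Ag Xv Pr),
    xs.length = as.length →
      Formula.FV (Formula.assigns xs as φ) = Formula.FV φ \ xs.toFinset := by
  intro xs
  induction xs with
  | nil =>
      intro as φ hlen
      cases as with
      | nil => simp [Formula.assigns]
      | cons a as => simp at hlen
  | cons x xs ih =>
      intro as φ hlen
      cases as with
      | nil => simp at hlen
      | cons a as =>
          rw [show Formula.assigns (x :: xs) (a :: as) φ
              = Formula.assign x a (Formula.assigns xs as φ) from rfl]
          show Formula.FV (Formula.assigns xs as φ) \ {x} = _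
          rw [ih φ (by simpa using hlen)]
          ext y
          simp only [Finset.mem_sdiff, Finset.mem_singleton, List.toFinset_cons,
            Finset.mem_insert, List.mem_toFinset]
          tauto

theorem wf_assigns : ∀ {xs : List Xv} {as : List Ag} (φ : Formula Ag Xv Pr),
    Formula.Wf (Formula.assigns xs as φ) ↔ Formula.Wf φ := by
  intro xs
  induction xs with
  | nil => intro as φ; cases as <;> exact Iff.rfl
  | cons x xs ih =>
      intro as φ
      cases as with
      | nil => exact Iff.rfl
      | cons a as =>
          rw [show Formula.assigns (x :: xs) (a :: as) φ
              = Formula.assign x a (Formula.assigns xs as φ) from rfl]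
          exact ih φ

/-- The zig-zag step for the Hennessy-Milner theorem. -/
theorem hm_zig {Ag Xv Pr : Type} [Fintype Ag] [Nonempty Ag] [DecidableEq Ag]
    [DecidableEq Xv] [Infinite Xv]
    (M N : KModel Ag Pr) (hM : M.IsModel) (hNsat : KSaturated Xv N)
    {w : M.W} {v : N.W}
    (h : ∀ α : Formula Ag Xv Pr, Formula.Sent α →
      ((∀ σ, KSat M α w σ) ↔ (∀ σ, KSat N α v σ)))
    (As : Set Ag) (w' : M.W) (hR : ∀ a ∈ As, M.R a w w') :
    ∃ v' : N.W, (∀ a ∈ As, N.R a v v') ∧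
      ∀ α : Formula Ag Xv Pr, Formula.Sent α →
        ((∀ σ, KSat M α w' σ) ↔ (∀ σ, KSat N α v' σ)) := by
  classical
  set Δ : Set (Formula Ag Xv Pr) := {α | Formula.Sent α ∧ ∀ σ, KSat M α w' σ} with hΔ
  have hfin : ∀ Δ₀ ⊆ Δ, Δ₀.Finite →
      ∃ v' : N.W, (∀ a ∈ As, N.R a v v') ∧ ∀ α ∈ Δ₀, ∀ σ : Xv → Ag, KSat N α v' σ := by
    intro Δ₀ hsub hfin
    set l := hfin.toFinset.toList with hldef
    have hl : ∀ φ, φ ∈ l ↔ φ ∈ Δ₀ := by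
      intro φ; rw [hldef, Finset.mem_toList, Set.Finite.mem_toFinset]
    set β := Formula.bigAnd l with hβdef
    have hβsent : Formula.Sent β := sent_bigAnd fun φ hφ => (hsub ((hl φ).mp hφ)).1
    have hβw' : ∀ σ, KSat M β w' σ := fun σ =>
      (ksat_bigAnd M l w' σ).mpr fun φ hφ => (hsub ((hl φ).mp hφ)).2 σ
    set la := (Set.toFinite As).toFinset.toList with hladef
    have hla : ∀ a, a ∈ la ↔ a ∈ As := by
      intro a; rw [hladef, Finset.mem_toList, Set.Finite.mem_toFinset]
    have hland : la.Nodup := Finset.nodup_toList _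
    set e := Infinite.natEmbedding Xv with hedef
    set xs : List Xv := (List.range la.length).map e with hxsdef
    have hxslen : xs.length = la.length := by simp [hxsdef]
    have hxsnd : xs.Nodup := List.Nodup.map e.injective List.nodup_range
    set α₀ : Formula Ag Xv Pr :=
      Formula.assigns xs la (.know xs.toFinset (.neg β)) with hα₀def
    have hα₀sent : Formula.Sent α₀ := by
      constructor
      · rw [hα₀def, wf_assigns]
        exact ⟨hβsent.1, hβsent.2⟩
      · rw [hα₀def, fv_assigns _ hxslen]
        simp [Formula.FV]
    have hMfail : ¬ ∀ σ, KSat M α₀ w σ := by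
      intro hall
      have hδ : ∀ a ∈ la, a ∈ M.δ w := fun a ha => hM.2.2.1 a w w' (hR a ((hla a).mp ha))
      have hknow := (ksat_assigns M _ hxslen w (Classical.arbitrary _)).mp
        (hall (Classical.arbitrary _)) hδ
      simp only [KSat] at hknow
      exact hknow w' (fun x hx => hR _ ((hla _).mp
        (updList_mem _ hxsnd hxslen (List.mem_toFinset.mp hx)))) (hβw' _)
    have hNfail : ¬ ∀ σ, KSat N α₀ v σ := fun hh => hMfail ((h α₀ hα₀sent).mpr hh)
    obtain ⟨σ₁, hσ₁⟩ := not_forall.mp hNfail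
    rw [ksat_assigns N _ hxslen v σ₁] at hσ₁
    push_neg at hσ₁
    obtain ⟨hδN, hknowN⟩ := hσ₁
    simp only [KSat, not_forall, not_not] at hknowN
    obtain ⟨v'', hv''R, hv''β⟩ := hknowN
    refine ⟨v'', ?_, ?_⟩
    · intro a ha
      obtain ⟨x, hx, hxa⟩ := updList_surj σ₁ hxsnd hxslen ((hla a).mpr ha)
      have := hv''R x (List.mem_toFinset.mpr hx)
      rwa [hxa] at this
    · intro φ hφ σ
      have hφl : KSat N φ v'' (updList σ₁ xs la) :=
        (ksat_bigAnd N l v'' _).mp hv''β φ ((hl φ).mpr hφ)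
      exact (ksat_forall_iff N (hsub hφ).1 v'' _).mpr hφl σ
  obtain ⟨v', hv'R, hv'Δ⟩ := hNsat As v Δ (fun α hα => hα.1) hfin
  refine ⟨v', hv'R, fun α hα => ?_⟩
  constructor
  · intro hα'
    exact hv'Δ α ⟨hα, hα'⟩
  · intro hN'
    by_contra hM'
    obtain ⟨σ₂, hσ₂⟩ := not_forall.mp hM'
    have hs : ∀ σ, KSat M (.neg α) w' σ := by
      intro σ
      show ¬ KSat M α w' σ
      exact fun hK => hσ₂ ((ksat_congr M hα.1 (by rw [hα.2]; simp)).mp hK)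
    have hnegsent : Formula.Sent (Formula.neg α) := ⟨hα.1, hα.2⟩
    have := hv'Δ (.neg α) ⟨hnegsent, hs⟩ (Classical.arbitrary _)
    exact this (hN' _)

end HMAux

/-- Hennessy-Milner property for saturated first-order Kripke models. -/
theorem hennessy_milner_kripke
    {Ag Xv Pr : Type} [Fintype Ag] [Nonempty Ag] [DecidableEq Ag]
    [DecidableEq Xv] [Countable Xv] [Infinite Xv] [Countable Pr]
    (M N : KModel Ag Pr) (hM : M.IsModel) (hN : N.IsModel)
    (hMsat : KSaturated Xv M) (hNsat : KSaturated Xv N)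
    (w : M.W) (v : N.W) :
    (∃ Z, IsKBisim M N Z ∧ (w, v) ∈ Z) ↔
      (∀ α : Formula Ag Xv Pr, Formula.Sent α →
        ((∀ σ : Xv → Ag, KSat M α w σ) ↔ (∀ σ : Xv → Ag, KSat N α v σ))) := by
  classical
  constructor
  · rintro ⟨Z, hZ, hwv⟩ α hα
    exact forall_congr' fun σ => ksat_bisim hZ α hwv σ
  · intro h
    refine ⟨{p : M.W × N.W | ∀ α : Formula Ag Xv Pr, Formula.Sent α →
      ((∀ σ, KSat M α p.1 σ) ↔ (∀ σ, KSat N α p.2 σ))}, ?_, h⟩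
    intro w₀ v₀ hwv₀
    have x₀ : Xv := Classical.arbitrary Xv
    refine ⟨⟨?_, ?_⟩, ?_, ?_⟩
    · ext a
      have hs : Formula.Sent (Formula.neg (Formula.assign x₀ a (Formula.neg
          (Formula.top : Formula Ag Xv Pr)))) := ⟨trivial, by simp [Formula.FV]⟩
      have h1 : (∀ σ, KSat M (Formula.neg (Formula.assign x₀ a (Formula.neg Formula.top)))
          w₀ σ) ↔ a ∈ M.δ w₀ := by simp [KSat]
      have h2 : (∀ σ, KSat N (Formula.neg (Formula.assign x₀ a (Formula.neg Formula.top)))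
          v₀ σ) ↔ a ∈ N.δ v₀ := by simp [KSat]
      rw [← h1, ← h2]
      exact hwv₀ _ hs
    · intro p
      ext a
      have hs : Formula.Sent (Formula.neg (Formula.assign x₀ a (Formula.neg
          (Formula.atom p x₀ : Formula Ag Xv Pr)))) := ⟨trivial, by simp [Formula.FV]⟩
      have h1 : (∀ σ, KSat M (Formula.neg (Formula.assign x₀ a (Formula.neg
          (Formula.atom p x₀)))) w₀ σ) ↔ a ∈ M.ρ p w₀ := by
        simp only [KSat, Classical.not_imp, not_not, Function.update_self]
        constructor
        · intro hh; exact (hh (Classical.arbitrary _)).2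
        · intro hh _; exact ⟨hM.2.2.2 p w₀ hh, hh⟩
      have h2 : (∀ σ, KSat N (Formula.neg (Formula.assign x₀ a (Formula.neg
          (Formula.atom p x₀)))) v₀ σ) ↔ a ∈ N.ρ p v₀ := by
        simp only [KSat, Classical.not_imp, not_not, Function.update_self]
        constructor
        · intro hh; exact (hh (Classical.arbitrary _)).2
        · intro hh _; exact ⟨hN.2.2.2 p v₀ hh, hh⟩
      rw [← h1, ← h2]
      exact hwv₀ _ hs
    · intro As w' hRw'
      obtain ⟨v', hv'R, heq⟩ := hm_zig M N hM hNsat hwv₀ As w' hRw'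
      exact ⟨v', hv'R, heq⟩
    · intro As v' hRv'
      obtain ⟨w', hw'R, heq⟩ := hm_zig N M hN hMsat
        (fun α hα => (hwv₀ α hα).symm) As v' hRv'
      exact ⟨w', hw'R, fun α hα => (heq α hα).symm⟩

end SimplicialEpistemic
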